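/- Let D_G be the derivation on polynomials in variables a, b determined by D_G(a) = ab and D_G(b) = ab (the Leibniz rule extension). Then for all n ≥ 0, D_G^n(a) evaluated at a = 1, b = x equals the Eulerian polynomial A_n(x); equivalently D_G^n(a) = a^{n+1} A_n(b/a) as a homogeneous polynomial identity. -/

import Mathlib

open Polynomial

noncomputable def PhiGE : MvPolynomial (Fin 2) ℝ →ₐ[ℝ] Polynomial ℝ :=
  MvPolynomial.aeval (fun i => if i = 0 then 1 else Polynomial.X)

lemma PhiGE_C (c : ℝ) : PhiGE (MvPolynomial.C c) = Polynomial.C c := by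
  simp [PhiGE, Polynomial.algebraMap_eq]

lemma PhiGE_X0 : PhiGE (MvPolynomial.X 0) = 1 := by simp [PhiGE]

lemma PhiGE_X1 : PhiGE (MvPolynomial.X 1) = Polynomial.X := by
  simp [PhiGE]

lemma pderiv_swapGE (i j : Fin 2) (q : MvPolynomial (Fin 2) ℝ) :
    MvPolynomial.pderiv i (MvPolynomial.pderiv j q)
      = MvPolynomial.pderiv j (MvPolynomial.pderiv i q) := by
  rcases eq_or_ne i j with rfl | hij
  · rfl
  · induction q using MvPolynomial.induction_on' with
    | monomial s a =>
        simp only [MvPolynomial.pderiv_monomial, Finsupp.tsub_apply,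
          Finsupp.single_eq_of_ne' hij, Finsupp.single_eq_of_ne' (Ne.symm hij), Nat.sub_zero]
        rw [tsub_right_comm]
        ring_nf
    | add p q hp hq => simp [hp, hq]

lemma PhiGE_pderiv (q : MvPolynomial (Fin 2) ℝ) :
    derivative (PhiGE q) = PhiGE (MvPolynomial.pderiv 1 q) := by
  induction q using MvPolynomial.induction_on with
  | C c => simp [PhiGE_C]
  | add p q hp hq => simp [hp, hq]
  | mul_X p i hp =>
      fin_cases i
      · simp [map_mul, PhiGE_X0, hp,
          MvPolynomial.pderiv_mul, MvPolynomial.pderiv_X_of_ne (by decide : (0:Fin 2) ≠ 1)]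
      · simp [map_mul, PhiGE_X1, hp, derivative_mul, MvPolynomial.pderiv_mul]
        ring

lemma PhiGE_eval (x : ℝ) (q : MvPolynomial (Fin 2) ℝ) :
    (PhiGE q).eval x
      = MvPolynomial.eval (fun i : Fin 2 => if i = 0 then (1 : ℝ) else x) q := by
  induction q using MvPolynomial.induction_on with
  | C c => simp [PhiGE_C]
  | add p q hp hq => simp [hp, hq]
  | mul_X p i hp =>
      fin_cases i
      · simp [map_mul, PhiGE_X0, hp]
      · simp [map_mul, PhiGE_X1, hp]

/-- Dumont's grammatical description of the Eulerian polynomials: if `D` is the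
derivation on `ℝ[a,b]` with `D a = ab` and `D b = ab`, then `Dⁿ(a)` evaluated at
`a = 1`, `b = x` equals the Eulerian polynomial `A_n(x)`. -/
theorem grammar_eulerian
    (D : Derivation ℝ (MvPolynomial (Fin 2) ℝ) (MvPolynomial (Fin 2) ℝ))
    (ha : D (MvPolynomial.X 0) = MvPolynomial.X 0 * MvPolynomial.X 1)
    (hb : D (MvPolynomial.X 1) = MvPolynomial.X 0 * MvPolynomial.X 1)
    (A : ℕ → Polynomial ℝ) (h0 : A 0 = 1)
    (hrec : ∀ n : ℕ, A (n + 1) =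
      ((n : Polynomial ℝ) + 1) * X * A n + X * (1 - X) * derivative (A n))
    (n : ℕ) (x : ℝ) :
    MvPolynomial.eval (fun i : Fin 2 => if i = 0 then (1 : ℝ) else x)
        ((⇑D)^[n] (MvPolynomial.X 0)) = (A n).eval x := by
  have h10 : (1 : Fin 2) ≠ 0 := by decide
  have h01 : (0 : Fin 2) ≠ 1 := by decide
  -- D equals (X0 X1) • (pderiv 0 + pderiv 1)
  have hDeq : D = ((MvPolynomial.X 0 * MvPolynomial.X 1 : MvPolynomial (Fin 2) ℝ) •
      (MvPolynomial.pderiv 0 + MvPolynomial.pderiv 1 :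
        Derivation ℝ (MvPolynomial (Fin 2) ℝ) (MvPolynomial (Fin 2) ℝ))) := by
    apply MvPolynomial.derivation_ext
    intro i
    fin_cases i
    · simp [ha, MvPolynomial.pderiv_X_of_ne h10, smul_eq_mul]
    · simp [hb, MvPolynomial.pderiv_X_of_ne h01, smul_eq_mul]
  have hD : ∀ q : MvPolynomial (Fin 2) ℝ, D q =
      MvPolynomial.X 0 * MvPolynomial.X 1 *
        (MvPolynomial.pderiv 0 q + MvPolynomial.pderiv 1 q) := by
    intro q
    rw [hDeq]
    simp [smul_eq_mul, mul_add]
  -- main induction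
  have main : ∀ m : ℕ,
      (MvPolynomial.X 0 * MvPolynomial.pderiv 0 ((⇑D)^[m] (MvPolynomial.X 0)) +
        MvPolynomial.X 1 * MvPolynomial.pderiv 1 ((⇑D)^[m] (MvPolynomial.X 0)) =
        MvPolynomial.C ((m : ℝ) + 1) * ((⇑D)^[m] (MvPolynomial.X 0))) ∧
      PhiGE ((⇑D)^[m] (MvPolynomial.X 0)) = A m := by
    intro m
    induction m with
    | zero =>
        constructor
        · simp [MvPolynomial.pderiv_X_of_ne h01]
        · simp [PhiGE_X0, h0]
    | succ k ih =>
        obtain ⟨hE, hPhi⟩ := ih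
        set q : MvPolynomial (Fin 2) ℝ := (⇑D)^[k] (MvPolynomial.X 0) with hq
        have hiter : (⇑D)^[k+1] (MvPolynomial.X 0) = D q := by
          rw [Function.iterate_succ_apply']
        have hCn1 : (MvPolynomial.C ((k : ℝ) + 1) : MvPolynomial (Fin 2) ℝ)
            = MvPolynomial.C (k : ℝ) + 1 := by rw [map_add, map_one]
        have hsw : MvPolynomial.pderiv (0 : Fin 2) (MvPolynomial.pderiv 1 q)
            = MvPolynomial.pderiv 1 (MvPolynomial.pderiv 0 q) := pderiv_swapGE 0 1 q
        have hpd0 := congrArg (⇑(MvPolynomial.pderiv (0 : Fin 2))) hE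
        have hpd1 := congrArg (⇑(MvPolynomial.pderiv (1 : Fin 2))) hE
        simp only [map_add, map_one, MvPolynomial.pderiv_mul, MvPolynomial.pderiv_C_mul,
          MvPolynomial.pderiv_C, MvPolynomial.pderiv_one, MvPolynomial.pderiv_X_self, MvPolynomial.pderiv_X_of_ne h01,
          MvPolynomial.pderiv_X_of_ne h10, one_mul, zero_mul, zero_add, add_zero]
          at hpd0 hpd1
        have key : MvPolynomial.X 0 * MvPolynomial.pderiv 0
              (MvPolynomial.pderiv 0 q + MvPolynomial.pderiv 1 q) +
            MvPolynomial.X 1 * MvPolynomial.pderiv 1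
              (MvPolynomial.pderiv 0 q + MvPolynomial.pderiv 1 q) =
            MvPolynomial.C (k : ℝ) *
              (MvPolynomial.pderiv 0 q + MvPolynomial.pderiv 1 q) := by
          simp only [map_add]
          linear_combination hpd0 + hpd1 + (MvPolynomial.X 0 - MvPolynomial.X 1) * hsw
        constructor
        · -- Euler identity for the next step
          rw [hiter, hD q]
          have hC2 : (MvPolynomial.C ((k : ℝ) + 1 + 1) : MvPolynomial (Fin 2) ℝ)
              = MvPolynomial.C (k : ℝ) + 2 := by
            rw [map_add, map_add, map_one]
            ring
          simp only [MvPolynomial.pderiv_mul, MvPolynomial.pderiv_X_self,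
            MvPolynomial.pderiv_X_of_ne h01, MvPolynomial.pderiv_X_of_ne h10,
            one_mul, zero_mul, zero_add, add_zero, mul_zero, mul_one]
          push_cast
          linear_combination MvPolynomial.X 0 * MvPolynomial.X 1 * key +
            (MvPolynomial.X 0 * MvPolynomial.X 1 *
              (MvPolynomial.pderiv 0 q + MvPolynomial.pderiv 1 q)) * hC2 * (-1)
        · -- Φ of the next step equals A (k+1)
          rw [hiter, hD q]
          have hd1 : PhiGE (MvPolynomial.pderiv 1 q) = derivative (A k) := by
            rw [← PhiGE_pderiv, hPhi]
          have hPhiE := congrArg PhiGE hE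
          simp only [map_add, map_mul, PhiGE_X0, PhiGE_X1, PhiGE_C, Polynomial.C_1,
            one_mul, hd1, hPhi] at hPhiE
          -- hPhiE : PhiGE (pderiv 0 q) + X * derivative (A k) = (C k + 1) * A k
          have hcast : Polynomial.C ((k : ℝ)) = ((k : Polynomial ℝ)) :=
            Polynomial.C_eq_natCast k
          simp only [map_mul, map_add, PhiGE_X0, PhiGE_X1, one_mul, hd1]
          rw [hrec k]
          linear_combination X * hPhiE + (X * A k) * hcast
  obtain ⟨-, hPhi⟩ := main n
  rw [← PhiGE_eval, hPhi]
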